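/- Let K_4 have vertices v_1, v_2, v_3, v_4 with list sizes f(v_1) = 3, f(v_2) = f(v_3) = 6, f(v_4) = 9, and let m = 72. Then the join G = K_4 ⊕ K̄_{72}, where each of the 72 independent vertices has list size 4, is not f^(72)-choosable, but for every m' < 72, K_4 ⊕ K̄_{m'} (with each independent vertex having list size 4) is f^(m')-choosable. -/

import Mathlib

def shf (x y : ℕ) (S : Finset ℕ) : Finset ℕ :=
  if y ∈ S ∧ x ∉ S then insert x (S.erase y) else S

namespace shf
variable {x y t : ℕ} {S : Finset ℕ}

lemma card (_hxy : x ≠ y) : (shf x y S).card = S.card := by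
  unfold shf; split
  · next h =>
    rw [Finset.card_insert_of_notMem (fun hx => h.2 (Finset.mem_of_mem_erase hx)),
      Finset.card_erase_of_mem h.1]
    have : 0 < S.card := Finset.card_pos.2 ⟨y, h.1⟩
    omega
  · rfl

lemma mem1 (h : t ∈ shf x y S) : t = x ∨ t ∈ S := by
  unfold shf at h; split at h
  · rcases Finset.mem_insert.1 h with h | h
    · exact Or.inl h
    · exact Or.inr (Finset.mem_of_mem_erase h)
  · exact Or.inr h

lemma mem1' (h : t ∈ shf x y S) (ht : t ≠ x) : t ∈ S := (mem1 h).resolve_left ht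

lemma memx (h : x ∈ shf x y S) : x ∈ S ∨ y ∈ S := by
  unfold shf at h; split at h
  · next h2 => exact Or.inr h2.1
  · exact Or.inl h

lemma memy (hxy : x ≠ y) (h : y ∈ shf x y S) : y ∈ S ∧ x ∈ S := by
  unfold shf at h; split at h
  · rcases Finset.mem_insert.1 h with h | h
    · exact absurd h.symm hxy
    · exact absurd (Finset.mem_erase.1 h).1 (by simp)
  · next h2 =>
    refine ⟨h, ?_⟩
    by_contra hx
    exact h2 ⟨h, hx⟩

lemma sum_key (h1 : y ∈ S) (h2 : x ∉ S) :
    (∑ a ∈ insert x (S.erase y), a) + y = (∑ a ∈ S, a) + x := by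
  rw [Finset.sum_insert (fun hx => h2 (Finset.mem_of_mem_erase hx))]
  have h3 := Finset.add_sum_erase S id h1
  simp only [id_eq] at h3 ⊢
  omega

lemma sum_le (hxy : x < y) : (∑ a ∈ shf x y S, a) ≤ ∑ a ∈ S, a := by
  unfold shf; split
  · next h =>
    have := sum_key h.1 h.2
    omega
  · exact le_rfl

lemma sum_lt (hch : shf x y S ≠ S) (hxy : x < y) : (∑ a ∈ shf x y S, a) < ∑ a ∈ S, a := by
  unfold shf at *; split at hch
  · next h =>
    have := sum_key h.1 h.2
    simp only [if_pos h]
    omega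
  · exact absurd rfl hch

lemma ne_self (hy : y ∈ S) (hx : x ∉ S) : shf x y S ≠ S := by
  have hmem : x ∈ shf x y S := by
    unfold shf; rw [if_pos ⟨hy, hx⟩]; exact Finset.mem_insert_self _ _
  exact fun he => hx (he ▸ hmem)

end shf

lemma exists_pair {S : Finset ℕ} (h : S ≠ Finset.range S.card) :
    ∃ x y, x < y ∧ y ∈ S ∧ x ∉ S := by
  by_contra hc
  push_neg at hc
  apply h
  rcases S.eq_empty_or_nonempty with rfl | hne
  · simp
  · have hm := S.max'_mem hne
    have hsub : S ⊆ Finset.range (S.max' hne + 1) := fun a ha =>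
      Finset.mem_range.2 (Nat.lt_succ_of_le (S.le_max' a ha))
    have hsup : Finset.range (S.max' hne + 1) ⊆ S := by
      intro a ha
      rcases Nat.lt_succ_iff_lt_or_eq.1 (Finset.mem_range.1 ha) with h' | rfl
      · exact hc a (S.max' hne) h' hm
      · exact hm
    have heq : S = Finset.range (S.max' hne + 1) := le_antisymm hsub hsup
    rw [heq, Finset.card_range]

def F4 (A B C D : Finset ℕ) : Finset (Finset ℕ) :=
  ((A ×ˢ B ×ˢ C ×ˢ D).filter fun p =>
      p.1 ≠ p.2.1 ∧ p.1 ≠ p.2.2.1 ∧ p.1 ≠ p.2.2.2 ∧ p.2.1 ≠ p.2.2.1 ∧ p.2.1 ≠ p.2.2.2 ∧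
        p.2.2.1 ≠ p.2.2.2).image
    fun p => {p.1, p.2.1, p.2.2.1, p.2.2.2}

lemma mem_F4 {T A B C D : Finset ℕ} :
    T ∈ F4 A B C D ↔ ∃ a b c d, a ∈ A ∧ b ∈ B ∧ c ∈ C ∧ d ∈ D ∧
      (a ≠ b ∧ a ≠ c ∧ a ≠ d ∧ b ≠ c ∧ b ≠ d ∧ c ≠ d) ∧ T = {a, b, c, d} := by
  constructor
  · intro h
    obtain ⟨⟨a, b, c, d⟩, hp, rfl⟩ := Finset.mem_image.1 h
    obtain ⟨hm, hd⟩ := Finset.mem_filter.1 hp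
    simp only [Finset.mem_product] at hm
    exact ⟨a, b, c, d, hm.1, hm.2.1, hm.2.2.1, hm.2.2.2, hd, rfl⟩
  · rintro ⟨a, b, c, d, ha, hb, hc, hd, hdist, rfl⟩
    refine Finset.mem_image.2 ⟨(a, b, c, d), Finset.mem_filter.2 ⟨?_, hdist⟩, rfl⟩
    simp only [Finset.mem_product]
    exact ⟨ha, hb, hc, hd⟩

lemma mem_F4' {T A B C D : Finset ℕ} :
    T ∈ F4 A B C D ↔ ∃ f : Fin 4 → ℕ, Function.Injective f ∧
      (∀ i, f i ∈ ![A, B, C, D] i) ∧ T = Finset.image f Finset.univ := by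
  rw [mem_F4]
  constructor
  · rintro ⟨a, b, c, d, ha, hb, hc, hd, ⟨h1,h2,h3,h4,h5,h6⟩, rfl⟩
    refine ⟨![a, b, c, d], ?_, ?_, ?_⟩
    · intro i j hij
      fin_cases i <;> fin_cases j <;> simp_all
    · intro i; fin_cases i <;> simpa
    · rw [show (Finset.univ : Finset (Fin 4)) = {0, 1, 2, 3} from rfl]
      simp [Finset.image_insert]
  · rintro ⟨f, hinj, hmem, rfl⟩
    refine ⟨f 0, f 1, f 2, f 3, hmem 0, hmem 1, hmem 2, hmem 3, ?_, ?_⟩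
    · refine ⟨?_, ?_, ?_, ?_, ?_, ?_⟩ <;> (intro h; exact absurd (hinj h) (by decide))
    · rw [show (Finset.univ : Finset (Fin 4)) = {0, 1, 2, 3} from rfl]
      simp [Finset.image_insert]

lemma card_of_mem_F4 {T A B C D : Finset ℕ} (h : T ∈ F4 A B C D) : T.card = 4 := by
  obtain ⟨a, b, c, d, _, _, _, _, ⟨h1,h2,h3,h4,h5,h6⟩, rfl⟩ := mem_F4.1 h
  rw [Finset.card_insert_of_notMem (by simp [h1, h2, h3]),
    Finset.card_insert_of_notMem (by simp [h4, h5]),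
    Finset.card_insert_of_notMem (by simp [h6]), Finset.card_singleton]

section step

variable {x y : ℕ} {A B C D : Finset ℕ}

lemma mem_F4_shf {T : Finset ℕ} :
    T ∈ F4 (shf x y A) (shf x y B) (shf x y C) (shf x y D) ↔
      ∃ f : Fin 4 → ℕ, Function.Injective f ∧
        (∀ i, f i ∈ shf x y (![A, B, C, D] i)) ∧ T = Finset.image f Finset.univ := by
  rw [mem_F4']
  constructor <;>
    (rintro ⟨f, h1, h2, h3⟩; refine ⟨f, h1, ?_, h3⟩; intro i;
      have := h2 i; fin_cases i <;> exact this)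

lemma stepmem (hxy : x ≠ y) {T : Finset ℕ}
    (hT : T ∈ F4 (shf x y A) (shf x y B) (shf x y C) (shf x y D)) :
    T ∈ F4 A B C D ∨ (x ∈ T ∧ y ∉ T ∧ insert y (T.erase x) ∈ F4 A B C D) := by
  obtain ⟨f, hinj, hmem, rfl⟩ := mem_F4_shf.1 hT
  by_cases hx : ∃ i, f i = x ∧ x ∉ ![A, B, C, D] i
  · obtain ⟨i0, hfi0, hxL⟩ := hx
    have hyL : y ∈ ![A, B, C, D] i0 := (shf.memx (hfi0 ▸ hmem i0)).resolve_left hxL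
    by_cases hy : ∃ j, f j = y
    · obtain ⟨j0, hfj0⟩ := hy
      have hij : i0 ≠ j0 := fun h => hxy ((h ▸ hfi0).symm.trans hfj0)
      have hyx := shf.memy hxy (hfj0 ▸ hmem j0)
      left
      have himg : Finset.image (⇑(Equiv.swap i0 j0)) (Finset.univ : Finset (Fin 4)) =
          Finset.univ := Finset.image_univ_equiv _
      refine mem_F4'.2 ⟨f ∘ Equiv.swap i0 j0, hinj.comp (Equiv.swap i0 j0).injective,
        fun i => ?_, ?_⟩
      · by_cases h1 : i = i0
        · subst h1; simpa [Equiv.swap_apply_left, hfj0] using hyL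
        · by_cases h2 : i = j0
          · subst h2; simpa [Equiv.swap_apply_right, hfi0] using hyx.2
          · rw [Function.comp_apply, Equiv.swap_apply_of_ne_of_ne h1 h2]
            refine shf.mem1' (hmem i) fun h => h1 (hinj (h.trans hfi0.symm))
      · rw [← Finset.image_image, himg]
    · push_neg at hy
      have hxT : x ∈ Finset.image f Finset.univ :=
        Finset.mem_image.2 ⟨i0, Finset.mem_univ _, hfi0⟩
      have hyT : y ∉ Finset.image f Finset.univ := by
        simp only [Finset.mem_image, Finset.mem_univ, true_and, not_exists]
        exact hy
      refine Or.inr ⟨hxT, hyT, ?_⟩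
      refine mem_F4'.2 ⟨Function.update f i0 y, ?_, fun i => ?_, ?_⟩
      · intro k l h
        by_cases hk : k = i0 <;> by_cases hl : l = i0
        · rw [hk, hl]
        · subst hk
          rw [Function.update_self, Function.update_of_ne hl] at h
          exact absurd h.symm (hy l)
        · subst hl
          rw [Function.update_self, Function.update_of_ne hk] at h
          exact absurd h (hy k)
        · rw [Function.update_of_ne hk, Function.update_of_ne hl] at h
          exact hinj h
      · by_cases hi : i = i0
        · subst hi; rw [Function.update_self]; exact hyL
        · rw [Function.update_of_ne hi]
          exact shf.mem1' (hmem i) fun h => hi (hinj (h.trans hfi0.symm))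
      · ext t
        simp only [Finset.mem_insert, Finset.mem_erase, Finset.mem_image, Finset.mem_univ,
          true_and]
        constructor
        · rintro (rfl | ⟨htx, j, rfl⟩)
          · exact ⟨i0, Function.update_self _ _ _⟩
          · have hji : j ≠ i0 := fun h => htx (by rw [h, hfi0])
            exact ⟨j, Function.update_of_ne hji _ _⟩
        · rintro ⟨j, rfl⟩
          by_cases hj : j = i0
          · subst hj; left; rw [Function.update_self]
          · right
            rw [Function.update_of_ne hj]
            exact ⟨fun h => hj (hinj (h.trans hfi0.symm)), j, rfl⟩
  · left
    push_neg at hx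
    refine mem_F4'.2 ⟨f, hinj, fun i => ?_, rfl⟩
    by_cases hfx : f i = x
    · exact hfx ▸ hx i hfx
    · exact shf.mem1' (hmem i) hfx

end step

section step2
variable {x y : ℕ} {A B C D : Finset ℕ}

lemma swap_mem (hxy : x ≠ y) {T : Finset ℕ}
    (hT : T ∈ F4 (shf x y A) (shf x y B) (shf x y C) (shf x y D))
    (hyT : y ∈ T) (hxT : x ∉ T) :
    insert x (T.erase y) ∈ F4 A B C D := by
  obtain ⟨f, hinj, hmem, rfl⟩ := mem_F4_shf.1 hT
  obtain ⟨j0, -, hfj0⟩ := Finset.mem_image.1 hyT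
  have hyx := shf.memy hxy (hfj0 ▸ hmem j0)
  have hfnex : ∀ i, f i ≠ x := by
    intro i h
    exact hxT (Finset.mem_image.2 ⟨i, Finset.mem_univ _, h⟩)
  refine mem_F4'.2 ⟨Function.update f j0 x, ?_, fun i => ?_, ?_⟩
  · intro k l h
    by_cases hk : k = j0 <;> by_cases hl : l = j0
    · rw [hk, hl]
    · subst hk
      rw [Function.update_self, Function.update_of_ne hl] at h
      exact absurd h.symm (hfnex l)
    · subst hl
      rw [Function.update_self, Function.update_of_ne hk] at h
      exact absurd h (hfnex k)
    · rw [Function.update_of_ne hk, Function.update_of_ne hl] at h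
      exact hinj h
  · by_cases hi : i = j0
    · subst hi; rw [Function.update_self]; exact hyx.2
    · rw [Function.update_of_ne hi]
      exact shf.mem1' (hmem i) (hfnex i)
  · ext t
    simp only [Finset.mem_insert, Finset.mem_erase, Finset.mem_image, Finset.mem_univ, true_and]
    constructor
    · rintro (rfl | ⟨hty, j, rfl⟩)
      · exact ⟨j0, Function.update_self _ _ _⟩
      · have hj : j ≠ j0 := fun h => hty (by rw [h, hfj0])
        exact ⟨j, Function.update_of_ne hj _ _⟩
    · rintro ⟨j, rfl⟩
      by_cases hj : j = j0
      · subst hj; left; rw [Function.update_self]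
      · right
        rw [Function.update_of_ne hj]
        exact ⟨fun h => hj (hinj (h.trans hfj0.symm)), j, rfl⟩

lemma swap_mem' (hxy : x ≠ y) {T : Finset ℕ}
    (hT : T ∈ F4 (shf x y A) (shf x y B) (shf x y C) (shf x y D))
    (hyT : y ∈ T) (hxT : x ∉ T) : T ∈ F4 A B C D := by
  obtain ⟨f, hinj, hmem, rfl⟩ := mem_F4_shf.1 hT
  have hfnex : ∀ i, f i ≠ x := by
    intro i h
    exact hxT (Finset.mem_image.2 ⟨i, Finset.mem_univ _, h⟩)
  exact mem_F4'.2 ⟨f, hinj, fun i => shf.mem1' (hmem i) (hfnex i), rfl⟩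

lemma card_step (hxy : x ≠ y) :
    (F4 (shf x y A) (shf x y B) (shf x y C) (shf x y D)).card ≤ (F4 A B C D).card := by
  classical
  apply Finset.card_le_card_of_injOn (fun T => if T ∈ F4 A B C D then T else insert y (T.erase x))
  · intro T hT
    by_cases h : T ∈ F4 A B C D
    · simpa [h] using h
    · obtain ⟨-, -, h3⟩ := (stepmem hxy hT).resolve_left h
      simpa [h] using h3
  · intro T1 h1 T2 h2 h
    simp only [Finset.mem_coe] at h1 h2
    dsimp only at h
    by_cases c1 : T1 ∈ F4 A B C D <;> by_cases c2 : T2 ∈ F4 A B C D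
    · rwa [if_pos c1, if_pos c2] at h
    · rw [if_pos c1, if_neg c2] at h
      obtain ⟨hx2, hy2, -⟩ := (stepmem hxy h2).resolve_left c2
      exfalso
      have hyT1 : y ∈ T1 := h ▸ Finset.mem_insert_self _ _
      have hxT1 : x ∉ T1 := by
        rw [h]
        simp only [Finset.mem_insert, Finset.mem_erase]
        push_neg
        exact ⟨hxy, fun hc => absurd rfl hc⟩
      have hkey := swap_mem hxy h1 hyT1 hxT1
      have he : insert x (T1.erase y) = T2 := by
        rw [h, Finset.erase_insert (fun hc => hy2 (Finset.mem_of_mem_erase hc)),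
          Finset.insert_erase hx2]
      exact c2 (he ▸ hkey)
    · rw [if_neg c1, if_pos c2] at h
      obtain ⟨hx1, hy1, -⟩ := (stepmem hxy h1).resolve_left c1
      exfalso
      have hyT2 : y ∈ T2 := h.symm ▸ Finset.mem_insert_self _ _
      have hxT2 : x ∉ T2 := by
        rw [← h]
        simp only [Finset.mem_insert, Finset.mem_erase]
        push_neg
        exact ⟨hxy, fun hc => absurd rfl hc⟩
      have hkey := swap_mem hxy h2 hyT2 hxT2
      have he : insert x (T2.erase y) = T1 := by
        rw [← h, Finset.erase_insert (fun hc => hy1 (Finset.mem_of_mem_erase hc)),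
          Finset.insert_erase hx1]
      exact c1 (he ▸ hkey)
    · rw [if_neg c1, if_neg c2] at h
      obtain ⟨hx1, hy1, -⟩ := (stepmem hxy h1).resolve_left c1
      obtain ⟨hx2, hy2, -⟩ := (stepmem hxy h2).resolve_left c2
      have rec1 : ∀ T : Finset ℕ, x ∈ T → y ∉ T →
          insert x ((insert y (T.erase x)).erase y) = T := by
        intro T hxT hyT
        rw [Finset.erase_insert (fun hc => hyT (Finset.mem_of_mem_erase hc)),
          Finset.insert_erase hxT]
      rw [← rec1 T1 hx1 hy1, ← rec1 T2 hx2 hy2, h]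

end step2

set_option maxRecDepth 100000 in
set_option maxHeartbeats 4000000 in
lemma base_card :
    (F4 (Finset.range 3) (Finset.range 6) (Finset.range 6) (Finset.range 9)).card = 72 := by
  decide

lemma bound72_aux : ∀ (n : ℕ) (A B C D : Finset ℕ), A.card = 3 → B.card = 6 → C.card = 6 →
    D.card = 9 →
    (∑ a ∈ A, a) + (∑ a ∈ B, a) + (∑ a ∈ C, a) + (∑ a ∈ D, a) ≤ n →
    72 ≤ (F4 A B C D).card := by
  intro n
  induction n using Nat.strong_induction_on with
  | _ n ih =>
    intro A B C D hA hB hC hD hsum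
    by_cases hbase : A = Finset.range 3 ∧ B = Finset.range 6 ∧ C = Finset.range 6 ∧
        D = Finset.range 9
    · obtain ⟨rfl, rfl, rfl, rfl⟩ := hbase
      exact le_of_eq base_card.symm
    · have main : ∀ x y, x < y →
          ((y ∈ A ∧ x ∉ A) ∨ (y ∈ B ∧ x ∉ B) ∨ (y ∈ C ∧ x ∉ C) ∨ (y ∈ D ∧ x ∉ D)) →
          72 ≤ (F4 A B C D).card := by
        intro x y hxy hw
        have hne : x ≠ y := Nat.ne_of_lt hxy
        have hlt : (∑ a ∈ shf x y A, a) + (∑ a ∈ shf x y B, a) + (∑ a ∈ shf x y C, a) +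
            (∑ a ∈ shf x y D, a) <
            (∑ a ∈ A, a) + (∑ a ∈ B, a) + (∑ a ∈ C, a) + (∑ a ∈ D, a) := by
          have lA := shf.sum_le (S := A) hxy
          have lB := shf.sum_le (S := B) hxy
          have lC := shf.sum_le (S := C) hxy
          have lD := shf.sum_le (S := D) hxy
          rcases hw with ⟨h1, h2⟩ | ⟨h1, h2⟩ | ⟨h1, h2⟩ | ⟨h1, h2⟩
          · have := shf.sum_lt (shf.ne_self h1 h2) hxy; omega
          · have := shf.sum_lt (shf.ne_self h1 h2) hxy; omega
          · have := shf.sum_lt (shf.ne_self h1 h2) hxy; omega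
          · have := shf.sum_lt (shf.ne_self h1 h2) hxy; omega
        have hih := ih _ (lt_of_lt_of_le hlt hsum) (shf x y A) (shf x y B) (shf x y C)
          (shf x y D) (by rw [shf.card hne, hA]) (by rw [shf.card hne, hB])
          (by rw [shf.card hne, hC]) (by rw [shf.card hne, hD]) le_rfl
        exact le_trans hih (card_step hne)
      simp only [not_and_or] at hbase
      rcases hbase with h | h | h | h
      · obtain ⟨x, y, hxy, hy, hx⟩ := exists_pair (by rw [hA]; exact h)
        exact main x y hxy (Or.inl ⟨hy, hx⟩)
      · obtain ⟨x, y, hxy, hy, hx⟩ := exists_pair (by rw [hB]; exact h)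
        exact main x y hxy (Or.inr (Or.inl ⟨hy, hx⟩))
      · obtain ⟨x, y, hxy, hy, hx⟩ := exists_pair (by rw [hC]; exact h)
        exact main x y hxy (Or.inr (Or.inr (Or.inl ⟨hy, hx⟩)))
      · obtain ⟨x, y, hxy, hy, hx⟩ := exists_pair (by rw [hD]; exact h)
        exact main x y hxy (Or.inr (Or.inr (Or.inr ⟨hy, hx⟩)))

lemma bound72 {A B C D : Finset ℕ} (hA : A.card = 3) (hB : B.card = 6) (hC : C.card = 6)
    (hD : D.card = 9) : 72 ≤ (F4 A B C D).card :=
  bound72_aux _ A B C D hA hB hC hD le_rfl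

/-- A graph `G` with list sizes `f` is `f`-choosable if every list assignment with the
prescribed list sizes admits a proper colouring from the lists. -/
def Choosable {V : Type*} (G : SimpleGraph V) (f : V → ℕ) : Prop :=
  ∀ L : V → Finset ℕ, (∀ v, (L v).card = f v) →
    ∃ c : V → ℕ, (∀ v, c v ∈ L v) ∧ ∀ ⦃u v⦄, G.Adj u v → c u ≠ c v

/-- The join `G ⊕ K̄_m` of a graph `G` with the edgeless graph on `m` vertices. -/
def joinK {V : Type*} (G : SimpleGraph V) (m : ℕ) : SimpleGraph (V ⊕ Fin m) where
  Adj a b :=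
    match a, b with
    | Sum.inl u, Sum.inl v => G.Adj u v
    | Sum.inl _, Sum.inr _ => True
    | Sum.inr _, Sum.inl _ => True
    | Sum.inr _, Sum.inr _ => False
  symm := by
    refine ⟨?_⟩
    rintro (u | i) (v | j) h
    · exact G.adj_symm h
    · trivial
    · trivial
    · exact h
  loopless := by
    refine ⟨?_⟩
    rintro (u | i) h
    · exact G.irrefl h
    · exact h

section glue
variable {V : Type*} {G : SimpleGraph V} {m : ℕ}

lemma joinK_adj_inl_inl {u v : V} : (joinK G m).Adj (Sum.inl u) (Sum.inl v) ↔ G.Adj u v :=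
  Iff.rfl

lemma joinK_adj_inl_inr {u : V} {j : Fin m} : (joinK G m).Adj (Sum.inl u) (Sum.inr j) :=
  trivial

lemma joinK_adj_inr_inl {u : V} {j : Fin m} : (joinK G m).Adj (Sum.inr j) (Sum.inl u) :=
  trivial

lemma joinK_not_adj_inr_inr {i j : Fin m} : ¬ (joinK G m).Adj (Sum.inr i) (Sum.inr j) :=
  fun h => h

end glue

lemma choosable_small (m' : ℕ) (hm : m' < 72) :
    Choosable (joinK (SimpleGraph.completeGraph (Fin 4)) m')
      (Sum.elim (![3, 6, 6, 9] : Fin 4 → ℕ) fun _ => 4) := by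
  intro L hL
  have hA : (L (Sum.inl 0)).card = 3 := hL (Sum.inl 0)
  have hB : (L (Sum.inl 1)).card = 6 := hL (Sum.inl 1)
  have hC : (L (Sum.inl 2)).card = 6 := hL (Sum.inl 2)
  have hD : (L (Sum.inl 3)).card = 9 := hL (Sum.inl 3)
  have h72 := bound72 hA hB hC hD
  set blocked : Finset (Finset ℕ) :=
    (Finset.univ : Finset (Fin m')).image (fun j => L (Sum.inr j)) with hblocked
  have hbc : blocked.card < 72 := by
    calc blocked.card ≤ (Finset.univ : Finset (Fin m')).card := Finset.card_image_le
    _ = m' := by simp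
    _ < 72 := hm
  have hnsub : ¬ F4 (L (Sum.inl 0)) (L (Sum.inl 1)) (L (Sum.inl 2)) (L (Sum.inl 3)) ⊆ blocked :=
    fun hsub => absurd (le_trans h72 (Finset.card_le_card hsub)) (by omega)
  obtain ⟨T, hTF, hTb⟩ := Finset.not_subset.1 hnsub
  obtain ⟨a, b, c, d, ha, hb, hc, hd, ⟨h1, h2, h3, h4, h5, h6⟩, hTeq⟩ := mem_F4.1 hTF
  have hcardT : T.card = 4 := card_of_mem_F4 hTF
  have hne : ∀ j : Fin m', (L (Sum.inr j) \ T).Nonempty := by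
    intro j
    rcases Finset.eq_empty_or_nonempty (L (Sum.inr j) \ T) with he | h
    · exfalso
      have hsub : L (Sum.inr j) ⊆ T := Finset.sdiff_eq_empty_iff_subset.1 he
      have hcl : (L (Sum.inr j)).card = 4 := hL (Sum.inr j)
      have : L (Sum.inr j) = T := Finset.eq_of_subset_of_card_le hsub (by omega)
      exact hTb (Finset.mem_image.2 ⟨j, Finset.mem_univ _, this⟩)
    · exact h
  refine ⟨Sum.elim ![a, b, c, d] (fun j => (hne j).choose), ?_, ?_⟩
  · rintro (i | j)
    · fin_cases i
      · exact ha
      · exact hb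
      · exact hc
      · exact hd
    · exact (Finset.mem_sdiff.1 (hne j).choose_spec).1
  · have hginT : ∀ j : Fin m', (hne j).choose ∉ T :=
      fun j => (Finset.mem_sdiff.1 (hne j).choose_spec).2
    have hinT : ∀ i : Fin 4, (![a, b, c, d] : Fin 4 → ℕ) i ∈ T := by
      intro i
      rw [hTeq]
      fin_cases i <;> simp
    rintro (u | i) (v | j) hadj
    · have huv : u ≠ v := hadj
      simp only [Sum.elim_inl]
      fin_cases u <;> fin_cases v <;>
        first
          | exact absurd rfl huv
          | simpa using h1
          | simpa using h2
          | simpa using h3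
          | simpa using h4
          | simpa using h5
          | simpa using h6
          | (simp; exact Ne.symm (by assumption))
    · simp only [Sum.elim_inl, Sum.elim_inr]
      exact fun he => hginT j (he ▸ hinT u)
    · simp only [Sum.elim_inl, Sum.elim_inr]
      exact fun he => hginT i (he.symm ▸ hinT v)
    · exact absurd hadj joinK_not_adj_inr_inr

lemma not_choosable_big :
    ¬ Choosable (joinK (SimpleGraph.completeGraph (Fin 4)) 72)
      (Sum.elim (![3, 6, 6, 9] : Fin 4 → ℕ) fun _ => 4) := by
  intro hch
  set F0 := F4 (Finset.range 3) (Finset.range 6) (Finset.range 6) (Finset.range 9) with hF0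
  have hlen : F0.toList.length = 72 := by rw [Finset.length_toList, base_card]
  set L : (Fin 4 ⊕ Fin 72) → Finset ℕ :=
    Sum.elim ![Finset.range 3, Finset.range 6, Finset.range 6, Finset.range 9]
      (fun j : Fin 72 => F0.toList.get (Fin.cast hlen.symm j)) with hLdef
  have hcards : ∀ v, (L v).card = Sum.elim (![3, 6, 6, 9] : Fin 4 → ℕ) (fun _ => 4) v := by
    rintro (i | j)
    · fin_cases i <;> simp [hLdef]
    · have hmem : F0.toList.get (Fin.cast hlen.symm j) ∈ F0 :=
        Finset.mem_toList.1 (List.get_mem _ _)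
      exact card_of_mem_F4 hmem
  obtain ⟨col, hmem, hprop⟩ := hch L hcards
  have hd01 : col (Sum.inl 0) ≠ col (Sum.inl 1) :=
    hprop (joinK_adj_inl_inl.2 (show (0 : Fin 4) ≠ 1 by decide))
  have hd02 : col (Sum.inl 0) ≠ col (Sum.inl 2) :=
    hprop (joinK_adj_inl_inl.2 (show (0 : Fin 4) ≠ 2 by decide))
  have hd03 : col (Sum.inl 0) ≠ col (Sum.inl 3) :=
    hprop (joinK_adj_inl_inl.2 (show (0 : Fin 4) ≠ 3 by decide))
  have hd12 : col (Sum.inl 1) ≠ col (Sum.inl 2) :=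
    hprop (joinK_adj_inl_inl.2 (show (1 : Fin 4) ≠ 2 by decide))
  have hd13 : col (Sum.inl 1) ≠ col (Sum.inl 3) :=
    hprop (joinK_adj_inl_inl.2 (show (1 : Fin 4) ≠ 3 by decide))
  have hd23 : col (Sum.inl 2) ≠ col (Sum.inl 3) :=
    hprop (joinK_adj_inl_inl.2 (show (2 : Fin 4) ≠ 3 by decide))
  have hTmem : ({col (Sum.inl 0), col (Sum.inl 1), col (Sum.inl 2), col (Sum.inl 3)} :
      Finset ℕ) ∈ F0 := by
    refine mem_F4.2 ⟨col (Sum.inl 0), col (Sum.inl 1), col (Sum.inl 2), col (Sum.inl 3),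
      hmem (Sum.inl 0), hmem (Sum.inl 1), hmem (Sum.inl 2), hmem (Sum.inl 3),
      ⟨hd01, hd02, hd03, hd12, hd13, hd23⟩, rfl⟩
  obtain ⟨k, hget⟩ := List.mem_iff_get.1 (Finset.mem_toList.2 hTmem)
  set j : Fin 72 := Fin.cast hlen k with hj
  have hLj : L (Sum.inr j) =
      ({col (Sum.inl 0), col (Sum.inl 1), col (Sum.inl 2), col (Sum.inl 3)} : Finset ℕ) := by
    simp only [hLdef, Sum.elim_inr]
    rw [show Fin.cast hlen.symm j = k from by simp [hj], hget]
  have hcolj := hmem (Sum.inr j)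
  rw [hLj] at hcolj
  simp only [Finset.mem_insert, Finset.mem_singleton] at hcolj
  rcases hcolj with h | h | h | h
  · exact hprop (joinK_adj_inr_inl (u := (0 : Fin 4)) (j := j)) h
  · exact hprop (joinK_adj_inr_inl (u := (1 : Fin 4)) (j := j)) h
  · exact hprop (joinK_adj_inr_inl (u := (2 : Fin 4)) (j := j)) h
  · exact hprop (joinK_adj_inr_inl (u := (3 : Fin 4)) (j := j)) h

/-- With list sizes `(3, 6, 6, 9)` on `K_4` and `4` on each independent vertex, the join
`K_4 ⊕ K̄_72` is not choosable, while `K_4 ⊕ K̄_{m'}` is choosable for every `m' < 72`. -/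
theorem stmt_19 :
    ¬ Choosable (joinK (SimpleGraph.completeGraph (Fin 4)) 72)
        (Sum.elim (![3, 6, 6, 9] : Fin 4 → ℕ) fun _ => 4) ∧
      ∀ m', m' < 72 →
        Choosable (joinK (SimpleGraph.completeGraph (Fin 4)) m')
          (Sum.elim (![3, 6, 6, 9] : Fin 4 → ℕ) fun _ => 4) :=
  ⟨not_choosable_big, choosable_small⟩
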